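/- Let K = Q(√D) with D squarefree, D ∉ {0,1}, and let G be an integral Z-valued generalized quadratic form in n variables over K. Then the associated quadratic form Q in 2n variables is integral over Z. Moreover, if D ≡ 2,3 (mod 4) and G is integral, or D ≡ 1 (mod 4) and G is classical, then Q is classical (its Gram matrix has entries in Z). -/

import Mathlib

open Matrix Polynomial

lemma aux_sq_not_rat (D : ℤ) (hsq : Squarefree D) (hD1 : D ≠ 1) (r : ℚ)
    (h : r ^ 2 = (D : ℚ)) : False := by
  have hint : IsIntegral ℤ r := by
    refine ⟨X ^ 2 - C D, Polynomial.monic_X_pow_sub_C D two_ne_zero, ?_⟩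
    have : (Polynomial.aeval r) (X ^ 2 - C D) = r ^ 2 - (D : ℚ) := by
      simp only [map_sub, map_pow, aeval_X, aeval_C]
      norm_num
    rw [← Polynomial.aeval_def, this, h, sub_self]
  obtain ⟨m, hm⟩ := IsIntegrallyClosed.isIntegral_iff.mp hint
  have hm' : (m : ℚ) = r := by exact_mod_cast hm
  have h2 : m ^ 2 = D := by exact_mod_cast hm' ▸ h
  have : IsUnit m := hsq m (by rw [← sq, h2])
  rcases Int.isUnit_iff.mp this with rfl | rfl <;> simp at h2 <;> omega

lemma aux_den (D : ℤ) (hsq : Squarefree D) (t : ℚ) (k : ℤ) (h : t ^ 2 * D = k) :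
    ∃ v : ℤ, (v : ℚ) = t := by
  have hd0 : ((t.den : ℤ) : ℚ) ≠ 0 := by exact_mod_cast t.den_ne_zero
  have h2 : (t.num : ℚ) ^ 2 * D = k * (t.den : ℚ) ^ 2 := by
    rw [← Rat.num_div_den t] at h
    field_simp at h
    linarith [h]
  have h3 : t.num ^ 2 * D = k * (t.den : ℤ) ^ 2 := by exact_mod_cast h2
  have hdvd : ((t.den : ℤ)) ^ 2 ∣ t.num ^ 2 * D := ⟨k, by linarith⟩
  have hco : IsCoprime (t.num) ((t.den : ℤ)) := by
    rw [Int.isCoprime_iff_gcd_eq_one]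
    exact t.reduced
  have hco2 : IsCoprime (((t.den : ℤ)) ^ 2) (t.num ^ 2) := (hco.symm.pow)
  have hdvdD : ((t.den : ℤ)) ^ 2 ∣ D := by
    refine hco2.dvd_of_dvd_mul_right ?_
    rwa [mul_comm] at hdvd
  have : IsUnit ((t.den : ℤ)) := hsq _ (by rwa [← sq])
  have hden1 : t.den = 1 := by
    rcases Int.isUnit_iff.mp this with h1 | h1 <;> omega
  exact ⟨t.num, by rw [← Rat.num_div_den t, hden1]; simp⟩

lemma aux_parity (D u v m : ℤ) (hD : D % 4 = 2 ∨ D % 4 = 3)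
    (h : u ^ 2 - v ^ 2 * D = 4 * m) : 2 ∣ u ∧ 2 ∣ v := by
  have h4 : ((u : ZMod 4)) ^ 2 = (v : ZMod 4) ^ 2 * (D : ZMod 4) := by
    have := congrArg (Int.cast : ℤ → ZMod 4) h
    push_cast at this
    have h40 : (4 : ZMod 4) = 0 := by decide
    linear_combination this + m * h40
  have hDz : (D : ZMod 4) = 2 ∨ (D : ZMod 4) = 3 := by
    have : ((D % 4 : ℤ) : ZMod 4) = (D : ZMod 4) := by
      have hh : ((D % 4 - D : ℤ) : ZMod 4) = 0 :=
        (ZMod.intCast_zmod_eq_zero_iff_dvd (D % 4 - D) 4).mpr (by omega)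
      push_cast at hh
      linear_combination hh
    rcases hD with hh | hh <;> [left; right] <;> rw [← this, hh] <;> decide
  have key : ∀ x y d : ZMod 4, (d = 2 ∨ d = 3) → x ^ 2 = y ^ 2 * d →
      (x = 0 ∨ x = 2) ∧ (y = 0 ∨ y = 2) := by decide
  obtain ⟨hx, hy⟩ := key _ _ _ hDz h4
  constructor
  · rcases hx with hh | hh
    · have := (ZMod.intCast_zmod_eq_zero_iff_dvd u 4).mp hh
      omega
    · have : ((u - 2 : ℤ) : ZMod 4) = 0 := by push_cast [hh]; ring
      have := (ZMod.intCast_zmod_eq_zero_iff_dvd (u - 2) 4).mp this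
      omega
  · rcases hy with hh | hh
    · have := (ZMod.intCast_zmod_eq_zero_iff_dvd v 4).mp hh
      omega
    · have : ((v - 2 : ℤ) : ZMod 4) = 0 := by push_cast [hh]; ring
      have := (ZMod.intCast_zmod_eq_zero_iff_dvd (v - 2) 4).mp this
      omega

/-- If G is an integral ℤ-valued generalized quadratic form in n variables over
K = ℚ(√D), then the associated quadratic form Q in 2n variables is integral over ℤ
(integer diagonal and even-denominator cross coefficients); moreover, if D ≡ 2,3 (mod 4)
(G integral), or D ≡ 1 (mod 4) and G is classical, then Q is classical (its Gram matrix
M_Q has integer entries). -/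
theorem stmt_7 (D : ℤ) (hsq : Squarefree D) (hD0 : D ≠ 0) (hD1 : D ≠ 1)
    (K : Type*) [Field K] [Algebra ℚ K] (sd : K) (hsd : sd ^ 2 = (D : K))
    (hgen : ∀ x : K, ∃ a b : ℚ, x = algebraMap ℚ K a + algebraMap ℚ K b * sd)
    (τ : K →ₐ[ℚ] K) (hτ : τ sd = -sd)
    (n : ℕ) (A B C : Matrix (Fin n) (Fin n) K) (hA : A.IsSymm) (hC : C.IsSymm)
    (ω : K) (hω : ω = if D % 4 = 1 then (1 + sd) / 2 else sd)
    (MG T MQ : Matrix (Fin n ⊕ Fin n) (Fin n ⊕ Fin n) K)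
    (hMG : MG = Matrix.fromBlocks A B Bᵀ C)
    (hT : T = Matrix.fromBlocks 1 (ω • (1 : Matrix (Fin n) (Fin n) K))
                1 (τ ω • (1 : Matrix (Fin n) (Fin n) K)))
    (hMQ : MQ = Tᵀ * MG * T)
    -- G is integral:
    (hdiag : ∀ i, A i i ∈ integralClosure ℤ K ∧ C i i ∈ integralClosure ℤ K)
    (hoff : ∀ i j, i ≠ j → 2 * A i j ∈ integralClosure ℤ K ∧
      2 * C i j ∈ integralClosure ℤ K)
    (hB : ∀ i j, 2 * B i j ∈ integralClosure ℤ K)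
    -- G is ℤ-valued:
    (hZval : ∀ v : Fin n → K, (∀ i, v i ∈ integralClosure ℤ K) →
      ∃ m : ℤ, dotProduct (Sum.elim v fun i => τ (v i))
        (MG.mulVec (Sum.elim v fun i => τ (v i))) = (m : K)) :
    -- Q is integral:
    ((∀ i, ∃ m : ℤ, MQ i i = (m : K)) ∧ (∀ i j, ∃ m : ℤ, 2 * MQ i j = (m : K))) ∧
    -- and Q is classical in the two cases:
    (((D % 4 = 2 ∨ D % 4 = 3) ∨
      (D % 4 = 1 ∧ ∀ i j, A i j ∈ integralClosure ℤ K ∧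
        B i j ∈ integralClosure ℤ K ∧ C i j ∈ integralClosure ℤ K)) →
      ∀ i j, ∃ m : ℤ, MQ i j = (m : K)) := by
  have hinj : Function.Injective (algebraMap ℚ K) := (algebraMap ℚ K).injective
  haveI : CharZero K := charZero_of_injective_algebraMap hinj
  have h2K : (2 : K) ≠ 0 := two_ne_zero
  -- rationals that are integral are integers
  have hratq : ∀ r : ℚ, IsIntegral ℤ ((algebraMap ℚ K) r) → ∃ m : ℤ, r = m := by
    intro r hr
    have : IsIntegral ℤ r := (isIntegral_algebraMap_iff hinj).mp hr
    obtain ⟨m, hm⟩ := IsIntegrallyClosed.isIntegral_iff.mp this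
    exact ⟨m, by exact_mod_cast hm.symm⟩
  have hτint : ∀ x : K, IsIntegral ℤ x → IsIntegral ℤ (τ x) := fun x h =>
    IsIntegral.map (τ.toRingHom.toIntAlgHom) h
  -- sd is not rational
  have hsd_not : ∀ r : ℚ, sd ≠ algebraMap ℚ K r := by
    intro r hr
    refine aux_sq_not_rat D hsq hD1 r (hinj ?_)
    rw [map_pow, ← hr, hsd]
    exact (map_intCast (algebraMap ℚ K) D).symm
  -- uniqueness of coordinates
  have huniq : ∀ a b a' b' : ℚ, algebraMap ℚ K a + algebraMap ℚ K b * sd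
      = algebraMap ℚ K a' + algebraMap ℚ K b' * sd → a = a' ∧ b = b' := by
    intro a b a' b' h
    by_cases hbb : b = b'
    · subst hbb
      refine ⟨hinj (add_right_cancel h), rfl⟩
    · exfalso
      have hden : algebraMap ℚ K b' - algebraMap ℚ K b ≠ 0 :=
        sub_ne_zero.mpr fun hh => hbb (hinj hh).symm
      refine hsd_not ((a - a') / (b' - b)) ?_
      rw [map_div₀, map_sub, map_sub]
      rw [eq_div_iff hden]
      linear_combination -h
  have huniqZ : ∀ x y u v : ℤ, (x : K) + (y : K) * sd = (u : K) + (v : K) * sd →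
      x = u ∧ y = v := by
    intro x y u v h
    have h' : algebraMap ℚ K (x : ℚ) + algebraMap ℚ K (y : ℚ) * sd
        = algebraMap ℚ K (u : ℚ) + algebraMap ℚ K (v : ℚ) * sd := by
      simpa [map_intCast] using h
    obtain ⟨h1, h2⟩ := huniq _ _ _ _ h'
    exact ⟨by exact_mod_cast h1, by exact_mod_cast h2⟩
  -- ω is integral
  have hsdint : IsIntegral ℤ sd := by
    refine ⟨Polynomial.X ^ 2 - Polynomial.C D,
      Polynomial.monic_X_pow_sub_C D two_ne_zero, ?_⟩
    have : (Polynomial.aeval sd) (Polynomial.X ^ 2 - Polynomial.C D)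
        = sd ^ 2 - (D : K) := by
      simp only [map_sub, map_pow, Polynomial.aeval_X, Polynomial.aeval_C]
      norm_num
    rw [← Polynomial.aeval_def, this, hsd, sub_self]
  have hωint : IsIntegral ℤ ω := by
    by_cases h1 : D % 4 = 1
    · rw [hω, if_pos h1]
      obtain ⟨c, hc⟩ : ∃ c : ℤ, (1 : ℤ) - D = 4 * c := ⟨(1 - D) / 4, by omega⟩
      refine ⟨Polynomial.X ^ 2 + (-Polynomial.X + Polynomial.C c),
        Polynomial.monic_X_pow_add ?_, ?_⟩
      · apply lt_of_le_of_lt (Polynomial.degree_add_le _ _)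
        rw [Polynomial.degree_neg, Polynomial.degree_X]
        exact max_lt (by norm_num) (lt_of_le_of_lt Polynomial.degree_C_le (by norm_num))
      · have hcK : 4 * (c : K) = 1 - (D : K) := by
          exact_mod_cast congrArg (Int.cast : ℤ → K) hc.symm
        have heval : (Polynomial.aeval ((1 + sd) / 2)) (Polynomial.X ^ 2
            + (-Polynomial.X + Polynomial.C c))
            = ((1 + sd) / 2) ^ 2 - (1 + sd) / 2 + (c : K) := by
          simp only [map_add, map_pow, map_neg, Polynomial.aeval_X, Polynomial.aeval_C,
            algebraMap_int_eq, eq_intCast, map_intCast]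
          ring
        rw [← Polynomial.aeval_def, heval]
        linear_combination (1 / 4 : K) * hsd + (1 / 4 : K) * hcK
    · rw [hω, if_neg h1]; exact hsdint
  have hτωint : IsIntegral ℤ (τ ω) := hτint ω hωint
  -- the dot product representation of MQ entries
  have hMQdot : ∀ (x y : (Fin n ⊕ Fin n) → K) (i j : Fin n ⊕ Fin n),
      (∀ k, x k = T k i) → (∀ k, y k = T k j) →
      MQ i j = dotProduct x (MG.mulVec y) := by
    intro x y i j hx hy
    rw [hMQ]
    simp only [Matrix.mul_apply, Matrix.transpose_apply, dotProduct,
      Matrix.mulVec, Finset.sum_mul, Finset.mul_sum]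
    rw [Finset.sum_comm]
    exact Finset.sum_congr rfl fun k _ => Finset.sum_congr rfl fun l _ => by
      rw [hx, hy, mul_assoc]
  -- columns of T are conjugate pairs of integral vectors
  have hcol : ∀ i : Fin n ⊕ Fin n, ∃ v : Fin n → K,
      (∀ k, IsIntegral ℤ (v k)) ∧
      (∀ k, (Sum.elim v fun s => τ (v s)) k = T k i) := by
    intro i
    cases i with
    | inl l =>
      refine ⟨Pi.single l 1, fun k => ?_, fun k => ?_⟩
      · rcases eq_or_ne k l with rfl | hne
        · simpa using isIntegral_one
        · simp [Pi.single_apply, hne]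
          exact isIntegral_zero
      · rcases k with k | k <;>
          simp [hT, Pi.single_apply, Matrix.one_apply, apply_ite τ]
    | inr l =>
      refine ⟨Pi.single l ω, fun k => ?_, fun k => ?_⟩
      · rcases eq_or_ne k l with rfl | hne
        · simpa using hωint
        · simp [Pi.single_apply, hne]
          exact isIntegral_zero
      · rcases k with k | k <;>
          simp [hT, Pi.single_apply, Matrix.one_apply, Matrix.smul_apply,
            smul_eq_mul, apply_ite τ, mul_ite, mul_one, mul_zero, eq_comm]
  -- symmetry
  have hsymMG : MGᵀ = MG := by
    rw [hMG, Matrix.fromBlocks_transpose, Matrix.transpose_transpose, hA.eq, hC.eq]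
  have hdotsym : ∀ x y : (Fin n ⊕ Fin n) → K,
      dotProduct x (MG.mulVec y) = dotProduct y (MG.mulVec x) := by
    intro x y
    conv_lhs => rw [Matrix.dotProduct_mulVec, ← hsymMG, Matrix.vecMul_transpose]
    exact dotProduct_comm _ _
  -- Part 1
  have hdiagMQ : ∀ i, ∃ m : ℤ, MQ i i = (m : K) := by
    intro i
    obtain ⟨v, hvint, hvcol⟩ := hcol i
    obtain ⟨m, hm⟩ := hZval v (fun k => hvint k)
    exact ⟨m, by rw [hMQdot _ _ i i hvcol hvcol]; exact hm⟩
  have hoffMQ : ∀ i j, ∃ m : ℤ, 2 * MQ i j = (m : K) := by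
    intro i j
    obtain ⟨v, hvint, hvcol⟩ := hcol i
    obtain ⟨u, huint, hucol⟩ := hcol j
    obtain ⟨m1, hm1⟩ := hZval (v + u) (fun k => Subalgebra.add_mem _ (hvint k) (huint k))
    obtain ⟨m2, hm2⟩ := hZval v (fun k => hvint k)
    obtain ⟨m3, hm3⟩ := hZval u (fun k => huint k)
    set x := Sum.elim v fun s => τ (v s) with hxdef
    set y := Sum.elim u fun s => τ (u s) with hydef
    have hsplit : (Sum.elim (v + u) fun s => τ ((v + u) s)) = x + y := by
      funext k
      rcases k with k | k <;> simp [hxdef, hydef, map_add]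
    rw [hsplit] at hm1
    have heexp : dotProduct (x + y) (MG.mulVec (x + y))
        = dotProduct x (MG.mulVec x) + dotProduct y (MG.mulVec y)
          + dotProduct x (MG.mulVec y) + dotProduct y (MG.mulVec x) := by
      simp [Matrix.mulVec_add, dotProduct_add, add_dotProduct]
      ring
    have hcross := hdotsym x y
    have hij : MQ i j = dotProduct x (MG.mulVec y) := hMQdot x y i j hvcol hucol
    refine ⟨m1 - m2 - m3, ?_⟩
    push_cast
    rw [hij]
    linear_combination hm1 - heexp - hm2 - hm3 + hcross
  refine ⟨⟨hdiagMQ, hoffMQ⟩, ?_⟩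
  -- entry formulas
  have hE11 : ∀ k l, MQ (Sum.inl k) (Sum.inl l)
      = A k l + B k l + B l k + C k l := by
    intro k l
    rw [hMQ, hT, hMG, Matrix.fromBlocks_transpose, Matrix.fromBlocks_multiply,
      Matrix.fromBlocks_multiply]
    simp [Matrix.mul_apply, Matrix.one_apply, Matrix.smul_apply, smul_eq_mul,
      mul_ite, ite_mul, mul_zero, zero_mul, Finset.sum_ite_eq, Finset.sum_ite_eq']
    ring
  have hE12 : ∀ k l, MQ (Sum.inl k) (Sum.inr l)
      = ω * A k l + τ ω * B k l + ω * B l k + τ ω * C k l := by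
    intro k l
    rw [hMQ, hT, hMG, Matrix.fromBlocks_transpose, Matrix.fromBlocks_multiply,
      Matrix.fromBlocks_multiply]
    simp [Matrix.mul_apply, Matrix.one_apply, Matrix.smul_apply, smul_eq_mul,
      mul_ite, ite_mul, mul_zero, zero_mul, Finset.sum_ite_eq, Finset.sum_ite_eq']
    ring
  have hE21 : ∀ k l, MQ (Sum.inr k) (Sum.inl l)
      = ω * A k l + ω * B k l + τ ω * B l k + τ ω * C k l := by
    intro k l
    rw [hMQ, hT, hMG, Matrix.fromBlocks_transpose, Matrix.fromBlocks_multiply,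
      Matrix.fromBlocks_multiply]
    simp [Matrix.mul_apply, Matrix.one_apply, Matrix.smul_apply, smul_eq_mul,
      mul_ite, ite_mul, mul_zero, zero_mul, Finset.sum_ite_eq, Finset.sum_ite_eq']
    ring
  have hE22 : ∀ k l, MQ (Sum.inr k) (Sum.inr l)
      = ω * ω * A k l + ω * τ ω * B k l + ω * τ ω * B l k + τ ω * τ ω * C k l := by
    intro k l
    rw [hMQ, hT, hMG, Matrix.fromBlocks_transpose, Matrix.fromBlocks_multiply,
      Matrix.fromBlocks_multiply]
    simp [Matrix.mul_apply, Matrix.one_apply, Matrix.smul_apply, smul_eq_mul,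
      mul_ite, ite_mul, mul_zero, zero_mul, Finset.sum_ite_eq, Finset.sum_ite_eq']
    ring
  intro hcase i j
  rcases hcase with hmod | ⟨hmod1, hent⟩
  · -- D ≡ 2, 3 (mod 4)
    have hω23 : ω = sd := by rw [hω, if_neg (by omega)]
    have hτω23 : τ ω = -sd := by rw [hω23, hτ]
    -- integral elements decompose over ℤ[sd]
    have hdecomp : ∀ x : K, IsIntegral ℤ x → ∃ p q : ℤ, x = (p : K) + (q : K) * sd := by
      intro x hx
      obtain ⟨α, β, hab⟩ := hgen x
      have hτx : τ x = algebraMap ℚ K α - algebraMap ℚ K β * sd := by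
        rw [hab, map_add, _root_.map_mul, τ.commutes, τ.commutes, hτ]
        ring
      have hsum : x + τ x = algebraMap ℚ K (2 * α) := by
        rw [hτx, hab, _root_.map_mul, map_ofNat]
        ring
      have hprod : x * τ x = algebraMap ℚ K (α ^ 2 - β ^ 2 * D) := by
        rw [hτx, hab, map_sub, _root_.map_mul, map_pow, map_pow, map_intCast]
        linear_combination (-(algebraMap ℚ K β ^ 2)) * hsd
      obtain ⟨u, hu⟩ := hratq (2 * α) (hsum ▸ hx.add (hτint x hx))
      obtain ⟨mm, hmm⟩ := hratq (α ^ 2 - β ^ 2 * D) (hprod ▸ hx.mul (hτint x hx))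
      have ht : (2 * β) ^ 2 * (D : ℚ) = ((u ^ 2 - 4 * mm : ℤ) : ℚ) := by
        push_cast
        linear_combination (2 * α + (u : ℚ)) * hu + (-4 : ℚ) * hmm
      obtain ⟨v, hv⟩ := aux_den D hsq (2 * β) (u ^ 2 - 4 * mm) ht
      have hZeq : u ^ 2 - v ^ 2 * D = 4 * mm := by
        have : ((u ^ 2 - v ^ 2 * D : ℤ) : ℚ) = ((4 * mm : ℤ) : ℚ) := by
          push_cast
          linear_combination (-((u : ℚ) + 2 * α)) * hu
            - (D : ℚ) * ((v : ℚ) + 2 * β) * hv + 4 * hmm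
        exact_mod_cast this
      obtain ⟨hu2, hv2⟩ := aux_parity D u v mm hmod hZeq
      obtain ⟨u', rfl⟩ := hu2
      obtain ⟨v', rfl⟩ := hv2
      have hα : α = (u' : ℚ) := by push_cast at hu; linarith
      have hβ : β = (v' : ℚ) := by push_cast at hv; linarith
      exact ⟨u', v', by rw [hab, hα, hβ, map_intCast, map_intCast]⟩
    -- main computation, for fixed k l
    have main : ∀ k l : Fin n,
        (∃ m : ℤ, MQ (Sum.inl k) (Sum.inl l) = (m : K)) ∧
        (∃ m : ℤ, MQ (Sum.inl k) (Sum.inr l) = (m : K)) ∧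
        (∃ m : ℤ, MQ (Sum.inr k) (Sum.inl l) = (m : K)) ∧
        (∃ m : ℤ, MQ (Sum.inr k) (Sum.inr l) = (m : K)) := by
      intro k l
      have haI : IsIntegral ℤ (2 * A k l) := by
        rcases eq_or_ne k l with rfl | hne
        · rw [two_mul]; exact Subalgebra.add_mem _ (hdiag k).1 (hdiag k).1
        · exact (hoff k l hne).1
      have hcI : IsIntegral ℤ (2 * C k l) := by
        rcases eq_or_ne k l with rfl | hne
        · rw [two_mul]; exact Subalgebra.add_mem _ (hdiag k).2 (hdiag k).2
        · exact (hoff k l hne).2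
      obtain ⟨a1, a2, ha⟩ := hdecomp _ haI
      obtain ⟨b1, b2, hb⟩ := hdecomp _ (hB k l)
      obtain ⟨b3, b4, hb'⟩ := hdecomp _ (hB l k)
      obtain ⟨c1, c2, hc⟩ := hdecomp _ hcI
      obtain ⟨m11, h11⟩ := hoffMQ (Sum.inl k) (Sum.inl l)
      obtain ⟨m12, h12⟩ := hoffMQ (Sum.inl k) (Sum.inr l)
      obtain ⟨m21, h21⟩ := hoffMQ (Sum.inr k) (Sum.inl l)
      obtain ⟨m22, h22⟩ := hoffMQ (Sum.inr k) (Sum.inr l)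
      have E11 : 2 * MQ (Sum.inl k) (Sum.inl l)
          = ((a1 + b1 + b3 + c1 : ℤ) : K) + ((a2 + b2 + b4 + c2 : ℤ) : K) * sd := by
        rw [hE11 k l]
        push_cast
        linear_combination ha + hb + hb' + hc
      have E12 : 2 * MQ (Sum.inl k) (Sum.inr l)
          = (((a2 + b4 - b2 - c2) * D : ℤ) : K) + ((a1 + b3 - b1 - c1 : ℤ) : K) * sd := by
        rw [hE12 k l, hτω23, hω23]
        push_cast
        linear_combination sd * ha - sd * hb + sd * hb' - sd * hc
          + ((a2 : K) - (b2 : K) + (b4 : K) - (c2 : K)) * hsd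
      have E21 : 2 * MQ (Sum.inr k) (Sum.inl l)
          = (((a2 + b2 - b4 - c2) * D : ℤ) : K) + ((a1 + b1 - b3 - c1 : ℤ) : K) * sd := by
        rw [hE21 k l, hτω23, hω23]
        push_cast
        linear_combination sd * ha + sd * hb - sd * hb' - sd * hc
          + ((a2 : K) + (b2 : K) - (b4 : K) - (c2 : K)) * hsd
      have E22 : 2 * MQ (Sum.inr k) (Sum.inr l)
          = (((a1 - b1 - b3 + c1) * D : ℤ) : K) + (((a2 - b2 - b4 + c2) * D : ℤ) : K) * sd := by
        rw [hE22 k l, hτω23, hω23]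
        push_cast
        linear_combination sd * sd * ha - sd * sd * hb - sd * sd * hb' + sd * sd * hc
          + (((a1 : K) - (b1 : K) - (b3 : K) + (c1 : K))
            + ((a2 : K) - (b2 : K) - (b4 : K) + (c2 : K)) * sd) * hsd
      obtain ⟨e1, e2⟩ := huniqZ (a1 + b1 + b3 + c1) (a2 + b2 + b4 + c2) m11 0 (by rw [← E11, h11]; push_cast; ring)
      obtain ⟨e3, e4⟩ := huniqZ ((a2 + b4 - b2 - c2) * D) (a1 + b3 - b1 - c1) m12 0 (by rw [← E12, h12]; push_cast; ring)
      obtain ⟨e5, e6⟩ := huniqZ ((a2 + b2 - b4 - c2) * D) (a1 + b1 - b3 - c1) m21 0 (by rw [← E21, h21]; push_cast; ring)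
      obtain ⟨e7, e8⟩ := huniqZ ((a1 - b1 - b3 + c1) * D) ((a2 - b2 - b4 + c2) * D) m22 0 (by rw [← E22, h22]; push_cast; ring)
      have e8' : a2 - b2 - b4 + c2 = 0 := by
        rcases mul_eq_zero.mp e8 with h | h
        · exact h
        · exact absurd h hD0
      refine ⟨⟨a1 + b1, ?_⟩, ⟨(a2 - b2) * D, ?_⟩, ⟨(a2 + b2) * D, ?_⟩,
        ⟨(a1 - b1) * D, ?_⟩⟩
      · apply mul_left_cancel₀ h2K
        rw [E11, show a1 + b1 + b3 + c1 = 2 * (a1 + b1) by omega,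
          show a2 + b2 + b4 + c2 = 0 from e2]
        push_cast
        ring
      · apply mul_left_cancel₀ h2K
        rw [E12, show a2 + b4 - b2 - c2 = 2 * (a2 - b2) by omega,
          show a1 + b3 - b1 - c1 = 0 from e4]
        push_cast
        ring
      · apply mul_left_cancel₀ h2K
        rw [E21, show a2 + b2 - b4 - c2 = 2 * (a2 + b2) by omega,
          show a1 + b1 - b3 - c1 = 0 from e6]
        push_cast
        ring
      · apply mul_left_cancel₀ h2K
        rw [E22, show a1 - b1 - b3 + c1 = 2 * (a1 - b1) by omega,
          show a2 - b2 - b4 + c2 = 0 from e8']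
        push_cast
        ring
    rcases i with k | k <;> rcases j with l | l
    exacts [(main k l).1, (main k l).2.1, (main k l).2.2.1, (main k l).2.2.2]
  · -- D ≡ 1 (mod 4) and G classical
    have hint : IsIntegral ℤ (MQ i j) := by
      rcases i with k | k <;> rcases j with l | l
      · rw [hE11 k l]
        exact (((hent k l).1.add (hent k l).2.1).add (hent l k).2.1).add (hent k l).2.2
      · rw [hE12 k l]
        exact (((hωint.mul (hent k l).1).add (hτωint.mul (hent k l).2.1)).add
          (hωint.mul (hent l k).2.1)).add (hτωint.mul (hent k l).2.2)
      · rw [hE21 k l]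
        exact (((hωint.mul (hent k l).1).add (hωint.mul (hent k l).2.1)).add
          (hτωint.mul (hent l k).2.1)).add (hτωint.mul (hent k l).2.2)
      · rw [hE22 k l]
        exact ((((hωint.mul hωint).mul (hent k l).1).add
          ((hωint.mul hτωint).mul (hent k l).2.1)).add
          ((hωint.mul hτωint).mul (hent l k).2.1)).add
          ((hτωint.mul hτωint).mul (hent k l).2.2)
    obtain ⟨m, hm⟩ := hoffMQ i j
    have hxr : MQ i j = algebraMap ℚ K ((m : ℚ) / 2) := by
      rw [map_div₀, map_intCast, map_ofNat]
      rw [eq_div_iff h2K]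
      linear_combination hm
    obtain ⟨m', hm'⟩ := hratq ((m : ℚ) / 2) (hxr ▸ hint)
    exact ⟨m', by rw [hxr, hm', map_intCast]⟩
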